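/- Let R = {R_1,...,R_m} be strings of length n, k ∈ [1,n], and let a_k, d_k be the positional Burrows–Wheeler transform arrays at column k. Then for j ∈ [1,k-1], one has |R[j,k]| ≠ |R[j+1,k]| if and only if j = d_k[i] - 1 for some i ∈ [1,m]. -/

import Mathlib

/-- The number of distinct substrings `R_i[j..k]` among the strings `R_1, …, R_m`. -/
def segCard {α : Type*} [DecidableEq α] {m : ℕ} (R : Fin m → ℕ → α) (j k : ℕ) : ℕ :=
  (Finset.univ.image (fun i : Fin m => fun x : Fin (k + 1 - j) => R i (j + x))).card

/-- The reversed prefix `R_i[k] R_i[k-1] ⋯ R_i[1]` as a list. -/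
def revPrefix {α : Type*} {m : ℕ} (R : Fin m → ℕ → α) (i : Fin m) (k : ℕ) : List α :=
  (List.range k).map (fun x => R i (k - x))

/-- `a` is a pBWT ordering permutation at column `k`: it sorts the reversed
prefixes lexicographically. -/
def SortsRevPrefixes {α : Type*} [LinearOrder α] {m : ℕ} (R : Fin m → ℕ → α)
    (a : Equiv.Perm (Fin m)) (k : ℕ) : Prop :=
  ∀ i j : Fin m, i ≤ j → revPrefix R (a i) k ≤ revPrefix R (a j) k

/-- `d` is the pBWT divergence array at column `k` for the ordering `a`:
`d i` is the starting position of the longest common suffix of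
`R_{a i}[1..k]` and `R_{a (i-1)}[1..k]`, with `d i = k + 1` when this suffix
is empty or `i` is the first index. -/
def IsDArray {α : Type*} {m : ℕ} (R : Fin m → ℕ → α) (a : Equiv.Perm (Fin m))
    (k : ℕ) (d : Fin m → ℕ) : Prop :=
  ∀ i : Fin m,
    (((i : ℕ) = 0) → d i = k + 1) ∧
    (((i : ℕ) ≠ 0) →
      1 ≤ d i ∧ d i ≤ k + 1 ∧
      (∀ x, d i ≤ x → x ≤ k →
        R (a i) x = R (a ⟨(i : ℕ) - 1, lt_of_le_of_lt (Nat.sub_le _ _) i.isLt⟩) x) ∧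
      (1 < d i →
        R (a i) (d i - 1) ≠ R (a ⟨(i : ℕ) - 1, lt_of_le_of_lt (Nat.sub_le _ _) i.isLt⟩) (d i - 1)))

namespace PBWT3

variable {α : Type*} [LinearOrder α]

lemma head_le {a b : α} {l l' : List α} (h : (a :: l) ≤ (b :: l')) : a ≤ b := by
  rcases lt_or_eq_of_le h with h | h
  · have h' : List.Lex (· < ·) (a :: l) (b :: l') := h
    cases h' with
    | cons _ => exact le_rfl
    | rel h => exact h.le
  · injection h with h1 _
    exact h1.le

lemma tail_le {a : α} {l l' : List α} (h : (a :: l) ≤ (a :: l')) : l ≤ l' := by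
  rcases lt_or_eq_of_le h with h | h
  · have h' : List.Lex (· < ·) (a :: l) (a :: l') := h
    cases h' with
    | cons h => exact le_of_lt h
    | rel h => exact absurd h (lt_irrefl a)
  · injection h with _ h2
    exact h2.le

lemma sandwich : ∀ (r : ℕ) (l1 l2 l3 : List α), l1 ≤ l2 → l2 ≤ l3 →
    l1.take r = l3.take r → l2.take r = l1.take r
  | 0, _, _, _, _, _, _ => by simp
  | r+1, [], l2, l3, h12, h23, h13 => by
      have h3 : l3 = [] := by
        cases l3 with
        | nil => rfl
        | cons c t3 => simp at h13
      subst h3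
      have h2 : l2 = [] := le_antisymm h23 (by
        cases l2 with
        | nil => exact le_rfl
        | cons b t2 => exact (show ([] : List α) < b :: t2 from List.Lex.nil).le)
      simp [h2]
  | r+1, a::t1, l2, [], _, _, h13 => by simp at h13
  | r+1, a::t1, [], c::t3, h12, _, _ => by
      have h1 : (a::t1 : List α) = [] := le_antisymm h12
        (show ([] : List α) < a :: t1 from List.Lex.nil).le
      simp at h1
  | r+1, a::t1, b::t2, c::t3, h12, h23, h13 => by
      simp only [List.take_succ_cons, List.cons.injEq] at h13 ⊢
      obtain ⟨hac, ht13⟩ := h13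
      subst hac
      have hab : a = b := le_antisymm (head_le h12) (head_le h23)
      subst hab
      exact ⟨rfl, sandwich r t1 t2 t3 (tail_le h12) (tail_le h23) ht13⟩

lemma const_of_adj {β : Type*} (g : ℕ → β) (p : ℕ) :
    ∀ q, p ≤ q → (∀ t, p ≤ t → t < q → g t = g (t + 1)) → g p = g q := by
  intro q
  induction q with
  | zero =>
      intro h _
      have : p = 0 := Nat.le_zero.mp h
      rw [this]
  | succ q ih =>
      intro hpq hadj
      by_cases hp : p = q + 1
      · rw [hp]
      · have hpq' : p ≤ q := by omega
        have h1 := ih hpq' (fun t h1 h2 => hadj t h1 (by omega))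
        rw [h1]
        exact hadj q hpq' (by omega)

lemma exists_adj {β : Type*} (g : ℕ → β) (p q : ℕ) (hpq : p ≤ q) (hne : g p ≠ g q) :
    ∃ t, p ≤ t ∧ t < q ∧ g t ≠ g (t + 1) := by
  by_contra h
  push_neg at h
  exact hne (const_of_adj g p q hpq h)

lemma take_eq_iff {m : ℕ} (R : Fin m → ℕ → α) (i i' : Fin m) (j k : ℕ) (hjk : j < k) :
    (revPrefix R i k).take (k - j) = (revPrefix R i' k).take (k - j) ↔
      ∀ x, j + 1 ≤ x → x ≤ k → R i x = R i' x := by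
  unfold revPrefix
  rw [← List.map_take, ← List.map_take, List.take_range]
  have hmin : min (k - j) k = k - j := by omega
  rw [hmin, List.map_eq_map_iff]
  constructor
  · intro h x hx1 hx2
    have := h (k - x) (List.mem_range.mpr (by omega))
    rwa [Nat.sub_sub_self hx2] at this
  · intro h y hy
    rw [List.mem_range] at hy
    exact h (k - y) (by omega) (by omega)

lemma aux_adj {m : ℕ} (R : Fin m → ℕ → α) (k : ℕ)
    (a : Equiv.Perm (Fin m)) (d : Fin m → ℕ)
    (ha : SortsRevPrefixes R a k) (hd : IsDArray R a k d)
    (j : ℕ) (hj1 : 1 ≤ j) (hjk : j < k)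
    (p q : Fin m) (hpq : p < q)
    (hagree : ∀ x, j + 1 ≤ x → x ≤ k → R (a p) x = R (a q) x)
    (hdiff : R (a p) j ≠ R (a q) j) :
    ∃ i : Fin m, j = d i - 1 := by
  have hm : 0 < m := p.pos
  -- sandwich: everything between p and q agrees with p on [j+1..k]
  have hsand : ∀ t : Fin m, p ≤ t → t ≤ q →
      ∀ x, j + 1 ≤ x → x ≤ k → R (a t) x = R (a p) x := by
    intro t h1 h2
    rw [← take_eq_iff R (a t) (a p) j k hjk]
    have e1 := ha p t h1
    have e2 := ha t q h2
    have e3 : (revPrefix R (a p) k).take (k - j) = (revPrefix R (a q) k).take (k - j) :=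
      (take_eq_iff R (a p) (a q) j k hjk).mpr hagree
    exact sandwich (k - j) _ _ _ e1 e2 e3
  -- find an adjacent differing pair
  let g : ℕ → α := fun t => R (a ⟨t % m, Nat.mod_lt t hm⟩) j
  have hg : ∀ t : Fin m, g (t : ℕ) = R (a t) j := by
    intro t
    show R (a ⟨(t : ℕ) % m, Nat.mod_lt _ hm⟩) j = R (a t) j
    have he : (⟨(t : ℕ) % m, Nat.mod_lt _ hm⟩ : Fin m) = t :=
      Fin.ext (Nat.mod_eq_of_lt t.isLt)
    rw [he]
  have hgpq : g p ≠ g q := by rw [hg p, hg q]; exact hdiff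
  obtain ⟨t, hpt, htq, hne⟩ := exists_adj g (p : ℕ) (q : ℕ) (le_of_lt hpq) hgpq
  have ht1 : t + 1 < m := lt_of_le_of_lt htq q.isLt
  have ht0 : t < m := by omega
  set t0 : Fin m := ⟨t, ht0⟩ with ht0def
  set t1 : Fin m := ⟨t + 1, ht1⟩ with ht1def
  have hne' : R (a t0) j ≠ R (a t1) j := by
    have e0 := hg t0
    have e1 := hg t1
    simp only [ht0def, ht1def] at e0 e1
    rw [← e0, ← e1]
    exact hne
  have hpt0 : p ≤ t0 := hpt
  have hpt1 : p ≤ t1 := by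
    rw [Fin.le_def]
    show (p : ℕ) ≤ t + 1
    omega
  have ht0q : t0 ≤ q := le_of_lt htq
  have ht1q : t1 ≤ q := htq
  have hagree01 : ∀ x, j + 1 ≤ x → x ≤ k → R (a t1) x = R (a t0) x := by
    intro x h1 h2
    rw [hsand t1 hpt1 ht1q x h1 h2, hsand t0 hpt0 ht0q x h1 h2]
  -- now use the d-array properties at t1
  have hne1 : (t1 : ℕ) ≠ 0 := by simp [ht1def]
  obtain ⟨hd1, hd2, hagr, hdif⟩ := (hd t1).2 hne1
  have hpred : (⟨(t1 : ℕ) - 1, lt_of_le_of_lt (Nat.sub_le _ _) t1.isLt⟩ : Fin m) = t0 := by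
    apply Fin.ext
    simp [ht1def, ht0def]
  rw [hpred] at hagr hdif
  have hgt : ¬ d t1 ≤ j := by
    intro hle
    exact hne' (hagr j hle (le_of_lt hjk)).symm
  have hlt : ¬ (j + 1 < d t1) := by
    intro hlt
    have hx1 : j + 1 ≤ d t1 - 1 := by omega
    have hx2 : d t1 - 1 ≤ k := by omega
    exact hdif (by omega) (by rw [hagree01 (d t1 - 1) hx1 hx2])
  exact ⟨t1, by omega⟩

end PBWT3

theorem stmt3 {α : Type*} [LinearOrder α] (m n : ℕ) (R : Fin m → ℕ → α)
    (k : ℕ) (hk1 : 1 ≤ k) (hk2 : k ≤ n)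
    (a : Equiv.Perm (Fin m)) (d : Fin m → ℕ)
    (ha : SortsRevPrefixes R a k) (hd : IsDArray R a k d)
    (j : ℕ) (hj1 : 1 ≤ j) (hj2 : j ≤ k - 1) :
    segCard R j k ≠ segCard R (j + 1) k ↔ ∃ i : Fin m, j = d i - 1 := by
  classical
  have hjk : j < k := by omega
  have hdom : 0 < k + 1 - j := by omega
  set f : Fin m → (Fin (k + 1 - j) → α) := fun i => fun x : Fin (k + 1 - j) => R i (j + x)
    with hf
  set s : Finset (Fin (k + 1 - j) → α) := Finset.univ.image f with hs
  set φ : (Fin (k + 1 - j) → α) → (Fin (k + 1 - (j + 1)) → α) :=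
    fun g => fun y : Fin (k + 1 - (j + 1)) => g ⟨(y : ℕ) + 1, by have := y.isLt; omega⟩
    with hφ
  have hsj : segCard R j k = s.card := rfl
  have hsj1 : segCard R (j + 1) k = (s.image φ).card := by
    rw [hs, Finset.image_image]
    unfold segCard
    congr 1
    apply Finset.image_congr
    intro i _
    funext y
    show R i ((j + 1) + (y : ℕ)) = R i (j + ((y : ℕ) + 1))
    congr 1
    omega
  -- the intermediate proposition
  have key : segCard R j k ≠ segCard R (j + 1) k ↔
      ∃ i i' : Fin m, (∀ x, j + 1 ≤ x → x ≤ k → R i x = R i' x) ∧ R i j ≠ R i' j := by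
    rw [hsj, hsj1]
    have hcard : (s.image φ).card = s.card ↔ Set.InjOn φ ↑s :=
      ⟨Finset.injOn_of_card_image_eq, Finset.card_image_of_injOn⟩
    constructor
    · intro hne
      have hninj : ¬ Set.InjOn φ ↑s := fun hinj => hne (hcard.mpr hinj).symm
      rw [Set.InjOn] at hninj
      push_neg at hninj
      obtain ⟨g1, hg1, g2, hg2, hφeq, hgne⟩ := hninj
      simp only [hs, Finset.coe_image, Finset.coe_univ, Set.image_univ, Set.mem_range] at hg1 hg2
      obtain ⟨i, rfl⟩ := hg1
      obtain ⟨i', rfl⟩ := hg2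
      refine ⟨i, i', ?_, ?_⟩
      · intro x hx1 hx2
        have hy : x - (j + 1) < k + 1 - (j + 1) := by omega
        have := congrFun hφeq ⟨x - (j + 1), hy⟩
        simp only [hφ, hf] at this
        have harg : j + (x - (j + 1) + 1) = x := by omega
        rwa [harg] at this
      · intro hj0
        apply hgne
        funext x
        by_cases hx : (x : ℕ) = 0
        · show R i (j + (x : ℕ)) = R i' (j + (x : ℕ))
          rw [hx]
          simpa using hj0
        · have hy : (x : ℕ) - 1 < k + 1 - (j + 1) := by have := x.isLt; omega
          have := congrFun hφeq ⟨(x : ℕ) - 1, hy⟩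
          simp only [hφ, hf] at this
          have harg : (x : ℕ) - 1 + 1 = (x : ℕ) := by omega
          rw [harg] at this
          exact this
    · rintro ⟨i, i', hag, hne⟩
      have hmem1 : f i ∈ s := Finset.mem_image_of_mem f (Finset.mem_univ i)
      have hmem2 : f i' ∈ s := Finset.mem_image_of_mem f (Finset.mem_univ i')
      have hφeq : φ (f i) = φ (f i') := by
        funext y
        show R i (j + ((y : ℕ) + 1)) = R i' (j + ((y : ℕ) + 1))
        exact hag _ (by omega) (by have := y.isLt; omega)
      have hfne : f i ≠ f i' := by
        intro heq
        apply hne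
        have := congrFun heq ⟨0, hdom⟩
        simpa [hf] using this
      intro heq
      have hinj := hcard.mp heq.symm
      exact hfne (hinj (by exact_mod_cast hmem1) (by exact_mod_cast hmem2) hφeq)
  rw [key]
  constructor
  · rintro ⟨i, i', hag, hne⟩
    set p : Fin m := a.symm i with hp
    set q : Fin m := a.symm i' with hq
    have hai : a p = i := a.apply_symm_apply i
    have hai' : a q = i' := a.apply_symm_apply i'
    rcases lt_trichotomy p q with h | h | h
    · exact PBWT3.aux_adj R k a d ha hd j hj1 hjk p q h
        (by rw [hai, hai']; exact hag) (by rw [hai, hai']; exact hne)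
    · exfalso
      apply hne
      have : i = i' := by rw [← hai, ← hai', h]
      rw [this]
    · exact PBWT3.aux_adj R k a d ha hd j hj1 hjk q p h
        (by rw [hai, hai']; intro x h1 h2; exact (hag x h1 h2).symm)
        (by rw [hai, hai']; exact hne.symm)
  · rintro ⟨t, hjt⟩
    by_cases ht : (t : ℕ) = 0
    · exfalso
      have := (hd t).1 ht
      omega
    · obtain ⟨hd1, hd2, hagr, hdif⟩ := (hd t).2 ht
      have hdt : d t = j + 1 := by omega
      refine ⟨a t, a ⟨(t : ℕ) - 1, lt_of_le_of_lt (Nat.sub_le _ _) t.isLt⟩, ?_, ?_⟩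
      · intro x hx1 hx2
        exact hagr x (by omega) hx2
      · have := hdif (by omega)
        rwa [hdt, Nat.add_sub_cancel] at this
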